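/- Let E be a real normed space and K ⊆ E a nontrivial cone with norm-base B_K such that the weak closure cl_w B_K is weakly compact. Then: (a) cor K^{a+} = {(x*, α) ∈ K^{aw#} | α > 0}; and (b) cor K^{a+} ≠ ∅ if and only if 0 ∉ cl S_K, where S_K = conv(B_K) and cl denotes norm closure. -/
import Mathlib

open Set

variable {E : Type*} [NormedAddCommGroup E] [NormedSpace ℝ E]

/-- `K` is a cone: contains `0` and is closed under nonnegative scalar multiplication. -/
def IsCone (K : Set E) : Prop :=
  (0 : E) ∈ K ∧ ∀ t : ℝ, 0 ≤ t → ∀ x ∈ K, t • x ∈ K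

/-- A cone is nontrivial if it is neither `{0}` nor the whole space. -/
def IsNontrivialCone (K : Set E) : Prop :=
  IsCone K ∧ K ≠ {0} ∧ K ≠ Set.univ

/-- The norm-base of a cone: its intersection with the unit sphere. -/
def normBase (K : Set E) : Set E := {x ∈ K | ‖x‖ = 1}

/-- Closure of a set with respect to the weak topology `σ(E, E*)`. -/
noncomputable def wClosure (S : Set E) : Set E :=
  (toWeakSpace ℝ E).symm '' closure ((toWeakSpace ℝ E) '' S)

/-- A set is weakly compact if it is compact in the weak topology `σ(E, E*)`. -/
def WeaklyCompact (S : Set E) : Prop :=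
  IsCompact ((toWeakSpace ℝ E) '' S)

/-- A set is weakly closed if it equals its weak closure. -/
noncomputable def WeaklyClosed (S : Set E) : Prop :=
  wClosure S = S

/-- The (topological) dual cone `K⁺`. -/
def dualCone (K : Set E) : Set (E →L[ℝ] ℝ) :=
  {f | ∀ k ∈ K, 0 ≤ f k}

/-- The set `K^#` of functionals strictly positive on `K \ {0}`. -/
def sharpCone (K : Set E) : Set (E →L[ℝ] ℝ) :=
  {f | ∀ k ∈ K, k ≠ 0 → 0 < f k}

/-- The set `K^{w#}` of functionals strictly positive on the weak closure of the norm-base. -/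
noncomputable def wSharpCone (K : Set E) : Set (E →L[ℝ] ℝ) :=
  {f | ∀ x ∈ wClosure (normBase K), 0 < f x}

/-- The algebraic interior (core) of a set in a real vector space. -/
def core {X : Type*} [AddCommGroup X] [Module ℝ X] (Ω : Set X) : Set X :=
  {x ∈ Ω | ∀ v : X, ∃ ε > 0, ∀ t ∈ Set.Icc (0 : ℝ) ε, x + t • v ∈ Ω}

/-- The augmented dual cone `K^{a+}`. -/
def augDualCone (K : Set E) : Set ((E →L[ℝ] ℝ) × ℝ) :=
  {p | 0 ≤ p.2 ∧ ∀ y ∈ K, 0 ≤ p.1 y - p.2 * ‖y‖}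

/-- The set `K^{a#}`. -/
def augSharpCone (K : Set E) : Set ((E →L[ℝ] ℝ) × ℝ) :=
  {p | 0 ≤ p.2 ∧ p.1 ∈ sharpCone K ∧ ∀ y ∈ K, y ≠ 0 → 0 < p.1 y - p.2 * ‖y‖}

/-- The set `K^{aw#}`. -/
noncomputable def augWSharpCone (K : Set E) : Set ((E →L[ℝ] ℝ) × ℝ) :=
  {p | 0 ≤ p.2 ∧ p.1 ∈ sharpCone K ∧ ∀ y ∈ wClosure (normBase K), p.2 < p.1 y}

/-- `S_C = conv(B_C)`. -/
noncomputable def convBase (C : Set E) : Set E := convexHull ℝ (normBase C)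

/-- `S_C^0 = conv({0} ∪ B_C)`. -/
noncomputable def convBase0 (C : Set E) : Set E := convexHull ℝ ({0} ∪ normBase C)

/- ------------------ auxiliary lemmas ------------------ -/

lemma subset_wClosure (S : Set E) : S ⊆ wClosure S := fun x hx =>
  ⟨toWeakSpace ℝ E x, subset_closure (mem_image_of_mem _ hx), (toWeakSpace ℝ E).symm_apply_apply x⟩

lemma le_on_wClosure (f : E →L[ℝ] ℝ) (c : ℝ) (S : Set E) (h : ∀ y ∈ S, c ≤ f y) :
    ∀ x ∈ wClosure S, c ≤ f x := by
  have hcont : Continuous fun z : WeakSpace ℝ E => f ((toWeakSpace ℝ E).symm z) :=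
    WeakBilin.eval_continuous ((topDualPairing ℝ E).flip) f
  have hcl : closure ((toWeakSpace ℝ E) '' S) ⊆
      {z : WeakSpace ℝ E | c ≤ f ((toWeakSpace ℝ E).symm z)} := by
    apply closure_minimal
    · rintro z ⟨y, hy, rfl⟩
      simpa [(toWeakSpace ℝ E).symm_apply_apply] using h y hy
    · exact isClosed_le continuous_const hcont
  rintro x ⟨z, hz, rfl⟩
  exact hcl hz

lemma normBase_nonempty {K : Set E} (hK : IsNontrivialCone K) : (normBase K).Nonempty := by
  obtain ⟨⟨h0, hsmul⟩, hne, -⟩ := hK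
  have : ∃ x ∈ K, x ≠ 0 := by
    by_contra h
    push_neg at h
    exact hne (Subset.antisymm (fun x hx => h x hx) (by simpa using h0))
  obtain ⟨x, hxK, hx0⟩ := this
  have hnx : ‖x‖ ≠ 0 := norm_ne_zero_iff.2 hx0
  refine ⟨‖x‖⁻¹ • x, hsmul _ (by positivity) x hxK, ?_⟩
  rw [norm_smul, norm_inv, norm_norm, inv_mul_cancel₀ hnx]

lemma mem_augDualCone_iff {K : Set E} (hK : IsCone K) (p : (E →L[ℝ] ℝ) × ℝ) :
    p ∈ augDualCone K ↔ 0 ≤ p.2 ∧ ∀ y ∈ normBase K, p.2 ≤ p.1 y := by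
  constructor
  · rintro ⟨h2, h⟩
    refine ⟨h2, fun y hy => ?_⟩
    have := h y hy.1
    rw [hy.2] at this; linarith
  · rintro ⟨h2, h⟩
    refine ⟨h2, fun y hy => ?_⟩
    rcases eq_or_ne y 0 with rfl | hy0
    · simp
    · have hny : (0:ℝ) < ‖y‖ := norm_pos_iff.2 hy0
      have hmem : ‖y‖⁻¹ • y ∈ normBase K := by
        refine ⟨hK.2 _ (by positivity) y hy, ?_⟩
        rw [norm_smul, norm_inv, norm_norm, inv_mul_cancel₀ hny.ne']
      have := h _ hmem
      rw [map_smul, smul_eq_mul] at this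
      have h3 : p.2 * ‖y‖ ≤ ‖y‖⁻¹ * p.1 y * ‖y‖ := by
        exact mul_le_mul_of_nonneg_right this hny.le
      rw [mul_comm (‖y‖⁻¹) (p.1 y), mul_assoc, inv_mul_cancel₀ hny.ne', mul_one] at h3
      linarith

/- ------------------ main theorem ------------------ -/

theorem stmt11 (K : Set E) (hK : IsNontrivialCone K)
    (hcomp : WeaklyCompact (wClosure (normBase K))) :
    core (augDualCone K) = {p ∈ augWSharpCone K | 0 < p.2} ∧
    ((core (augDualCone K)).Nonempty ↔ (0 : E) ∉ closure (convBase K)) := by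
  obtain ⟨hcone, hne0, hneuniv⟩ := hK
  have hBne : (normBase K).Nonempty := normBase_nonempty ⟨hcone, hne0, hneuniv⟩
  set B : Set E := normBase K with hB
  set W : Set E := wClosure (normBase K) with hW
  have hBW : B ⊆ W := subset_wClosure _
  have hWne : W.Nonempty := hBne.mono hBW
  -- part (a)
  have hmain : core (augDualCone K) = {p ∈ augWSharpCone K | 0 < p.2} := by
    ext p
    obtain ⟨f, α⟩ := p
    simp only [core, augWSharpCone, mem_setOf_eq, mem_sep_iff]
    constructor
    · rintro ⟨hp, hcore⟩
      -- α > 0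
      obtain ⟨ε, hε, hεmem⟩ := hcore (0, -1)
      have hαε : (f, α) + ε • ((0:E →L[ℝ] ℝ), (-1:ℝ)) ∈ augDualCone K :=
        hεmem ε ⟨hε.le, le_refl _⟩
      have hαpos : 0 < α := by
        have := hαε.1
        simp only [Prod.snd_add, Prod.smul_snd, smul_eq_mul] at this
        linarith
      -- f strictly > α on wClosure B
      obtain ⟨ε₂, hε₂, hε₂mem⟩ := hcore (-f, 0)
      set t : ℝ := min ε₂ (1/2) with ht
      have htpos : 0 < t := lt_min hε₂ (by norm_num)
      have htle : t ≤ 1/2 := min_le_right _ _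
      have hmem2 : (f, α) + t • ((-f : E →L[ℝ] ℝ), (0:ℝ)) ∈ augDualCone K :=
        hε₂mem t ⟨htpos.le, min_le_left _ _⟩
      have hbase : ∀ y ∈ B, α / (1 - t) ≤ f y := by
        intro y hy
        have h1t : (0:ℝ) < 1 - t := by linarith
        have := ((mem_augDualCone_iff hcone _).1 hmem2).2 y hy
        simp only [Prod.fst_add, Prod.snd_add, Prod.smul_fst, Prod.smul_snd,
          ContinuousLinearMap.add_apply, ContinuousLinearMap.coe_smul', Pi.smul_apply,
          ContinuousLinearMap.neg_apply, smul_eq_mul, mul_zero, add_zero, mul_neg] at this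
        rw [div_le_iff₀ h1t]
        nlinarith [this]
      have hgt : ∀ x ∈ W, α < f x := by
        intro x hx
        have h1t : (0:ℝ) < 1 - t := by linarith
        have hlt : α < α / (1 - t) := by
          rw [lt_div_iff₀ h1t]
          nlinarith
        exact lt_of_lt_of_le hlt (le_on_wClosure f _ B hbase x hx)
      refine ⟨⟨hp.1, ?_, hgt⟩, hαpos⟩
      -- sharp cone
      intro k hk hk0
      have := hp.2 k hk
      have : α * ‖k‖ ≤ f k := by linarith
      have hnk : (0:ℝ) < ‖k‖ := norm_pos_iff.2 hk0
      nlinarith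
    · rintro ⟨⟨-, hsharp, hgt⟩, hαpos⟩
      -- membership
      have hmemA : (f, α) ∈ augDualCone K := by
        rw [mem_augDualCone_iff hcone]
        exact ⟨hαpos.le, fun y hy => (hgt y (hBW hy)).le⟩
      refine ⟨hmemA, ?_⟩
      rintro ⟨g, β⟩
      -- min of f on the weakly compact set W
      have hcont : Continuous fun z : WeakSpace ℝ E => f ((toWeakSpace ℝ E).symm z) :=
        WeakBilin.eval_continuous ((topDualPairing ℝ E).flip) f
      have hWimg : ((toWeakSpace ℝ E) '' W).Nonempty := hWne.image _
      obtain ⟨z₀, hz₀, hz₀min⟩ := hcomp.exists_isMinOn hWimg hcont.continuousOn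
      set x₀ : E := (toWeakSpace ℝ E).symm z₀ with hx₀
      have hx₀W : x₀ ∈ W := by
        obtain ⟨w, hw, rfl⟩ := hz₀
        simpa [hx₀, (toWeakSpace ℝ E).symm_apply_apply] using hw
      set δ : ℝ := f x₀ - α with hδ
      have hδpos : 0 < δ := sub_pos.2 (hgt x₀ hx₀W)
      have hminf : ∀ x ∈ W, f x₀ ≤ f x := by
        intro x hx
        have : toWeakSpace ℝ E x ∈ (toWeakSpace ℝ E) '' W := mem_image_of_mem _ hx
        have := hz₀min this
        simpa [hx₀, (toWeakSpace ℝ E).symm_apply_apply] using this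
      set M : ℝ := ‖g‖ + |β| with hM
      have hMnn : 0 ≤ M := by positivity
      set ε : ℝ := min (δ / (M + 1)) (α / (|β| + 1)) with hε
      have hεpos : 0 < ε := lt_min (by positivity) (by positivity)
      refine ⟨ε, hεpos, ?_⟩
      intro t ht
      rw [mem_augDualCone_iff hcone]
      have ht0 : 0 ≤ t := ht.1
      have htε : t ≤ ε := ht.2
      constructor
      · -- second coordinate nonneg
        have h1 : t * |β| ≤ ε * |β| := mul_le_mul_of_nonneg_right htε (abs_nonneg _)
        have h2 : ε * |β| ≤ (α / (|β| + 1)) * |β| :=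
          mul_le_mul_of_nonneg_right (min_le_right _ _) (abs_nonneg _)
        have h3 : (α / (|β| + 1)) * |β| < α := by
          rw [div_mul_eq_mul_div, div_lt_iff₀ (by positivity)]
          nlinarith [abs_nonneg β]
        have hβ : -(t * β) ≤ t * |β| := by
          rw [← mul_neg]
          exact mul_le_mul_of_nonneg_left (neg_le_abs β) ht0
        simp only [Prod.snd_add, Prod.smul_snd, smul_eq_mul]
        linarith
      · intro y hy
        simp only [Prod.fst_add, Prod.snd_add, Prod.smul_fst, Prod.smul_snd,
          ContinuousLinearMap.add_apply, ContinuousLinearMap.coe_smul',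
          Pi.smul_apply, smul_eq_mul]
        -- f y ≥ α + δ
        have hfy : α + δ ≤ f y := by
          have := hminf y (hBW hy)
          simp only [hδ] at *
          linarith
        have hgy : |g y| ≤ ‖g‖ := by
          calc |g y| ≤ ‖g‖ * ‖y‖ := g.le_opNorm y
          _ = ‖g‖ := by rw [hy.2, mul_one]
        have hbound : -(t * (g y - β)) ≤ t * M := by
          have habs : |g y - β| ≤ M := by
            calc |g y - β| ≤ |g y| + |β| := abs_sub _ _
            _ ≤ ‖g‖ + |β| := by linarith
          have := mul_le_mul_of_nonneg_left (neg_le_abs (g y - β)) ht0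
          rw [mul_neg] at *
          nlinarith
        have htM : t * M ≤ δ := by
          have h1 : t * M ≤ ε * M := mul_le_mul_of_nonneg_right htε hMnn
          have h2 : ε * M ≤ (δ / (M + 1)) * M :=
            mul_le_mul_of_nonneg_right (min_le_left _ _) hMnn
          have h3 : (δ / (M + 1)) * M ≤ δ := by
            rw [div_mul_eq_mul_div, div_le_iff₀ (by positivity)]
            nlinarith
          exact le_trans h1 (le_trans h2 h3)
        nlinarith
  refine ⟨hmain, ?_⟩
  -- part (b)
  constructor
  · rintro ⟨p, hp⟩
    rw [hmain] at hp
    obtain ⟨⟨-, -, hgt⟩, hαpos⟩ := hp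
    intro h0
    -- f ≥ α on conv B, hence on its closure
    have hαle : ∀ y ∈ B, p.2 ≤ p.1 y := fun y hy => (hgt y (hBW hy)).le
    have hconv : convBase K ⊆ {x : E | p.2 ≤ p.1 x} := by
      apply convexHull_min hαle
      exact convex_halfSpace_ge ⟨fun a b => map_add p.1 a b, fun c a => map_smul p.1 c a⟩ p.2
    have hclosed : IsClosed {x : E | p.2 ≤ p.1 x} := isClosed_le continuous_const p.1.continuous
    have := closure_minimal hconv hclosed h0
    simp only [mem_setOf_eq, map_zero] at this
    linarith
  · intro h0
    obtain ⟨f, u, hu0, hub⟩ := geometric_hahn_banach_point_closed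
      (Convex.closure (convex_convexHull ℝ _)) isClosed_closure h0
    rw [map_zero] at hu0
    have hfB : ∀ y ∈ B, u ≤ f y := fun y hy =>
      (hub y (subset_closure (subset_convexHull ℝ _ hy))).le
    have hfW : ∀ x ∈ W, u ≤ f x := le_on_wClosure f u B hfB
    refine ⟨(f, u/2), ?_⟩
    rw [hmain]
    refine ⟨⟨by linarith, ?_, fun x hx => lt_of_lt_of_le (by linarith) (hfW x hx)⟩, by linarith⟩
    intro k hk hk0
    have hnk : (0:ℝ) < ‖k‖ := norm_pos_iff.2 hk0
    have hmem : ‖k‖⁻¹ • k ∈ B := by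
      refine ⟨hcone.2 _ (by positivity) k hk, ?_⟩
      rw [norm_smul, norm_inv, norm_norm, inv_mul_cancel₀ hnk.ne']
    have := hfB _ hmem
    rw [map_smul, smul_eq_mul] at this
    nlinarith [inv_pos.2 hnk]
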